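/- Let G = (V,E) be a finite connected vertex-transitive graph with diameter D ≥ 1, let f : V(G̃) → H be an injective map into a real Hilbert space H, and let f̄ be its symmetrization. Suppose β > 0 is such that for every i with 1 ≤ i ≤ D+1 there exists an edge (u,v) ∈ E with ‖f̄(u^{(i)}) − f̄(v^{(i)})‖ ≥ β. Then there exists a horizontal edge (x,y) of G̃ such that ‖f̄(x) − f̄(y)‖² / d_{G̃}(x,y)² ≥ ‖f̄(s) − f̄(t)‖² / d_{G̃}(s,t)² + β²/36. -/

import Mathlib

open scoped ENNReal

/-- Cost of a chain (list of vertices): sum of the length function over consecutive pairs. -/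
noncomputable def chainCost {α : Type} (len : α → α → ℝ≥0∞) : List α → ℝ≥0∞
  | a :: b :: l => len a b + chainCost len (b :: l)
  | _ => 0
  termination_by l => l.length

/-- A finite weighted multigraph with two distinguished vertices `s` and `t`.
Edge lengths take values in `ℝ≥0∞`. -/
structure STGraph where
  V : Type
  E : Type
  finV : Fintype V
  finE : Fintype E
  ends : E → V × V
  elen : E → ℝ≥0∞
  s : V
  t : V

attribute [instance] STGraph.finV STGraph.finE

namespace STGraph

/-- The length between two vertices: the infimum of lengths of edges joining them
(`⊤` if there is no such edge). -/
noncomputable def lenFn (G : STGraph) (u v : G.V) : ℝ≥0∞ :=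
  ⨅ e : {e : G.E // G.ends e = (u, v) ∨ G.ends e = (v, u)}, G.elen e.1

/-- The shortest-path (extended) distance between two vertices. -/
noncomputable def edist (G : STGraph) (u v : G.V) : ℝ≥0∞ :=
  ⨅ l : {l : List G.V // l.head? = some u ∧ l.getLast? = some v}, chainCost G.lenFn l.1

/-- `len G` is the distance between the two distinguished vertices. -/
noncomputable def len (G : STGraph) : ℝ≥0∞ := G.edist G.s G.t

/-- An `s`-`t` graph is *proper* if all edge lengths are positive and finite, there are no
self-loops, the graph is connected, and `s ≠ t`. -/
def Proper (G : STGraph) : Prop :=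
  (∀ e, 0 < G.elen e ∧ G.elen e < ⊤) ∧
  (∀ e, (G.ends e).1 ≠ (G.ends e).2) ∧
  (∀ u v, G.edist u v ≠ ⊤) ∧ G.s ≠ G.t

/-- The inner (non-terminal) vertices of an `s`-`t` graph. -/
abbrev Inner (G : STGraph) : Type := {v : G.V // v ≠ G.s ∧ v ≠ G.t}

noncomputable instance (G : STGraph) : Fintype G.Inner := Fintype.ofFinite _

/-- Where a vertex `w` of `G` lands in `H ⊘ G` when the copy of `G` is glued along edge `e` of
`H`: `s(G)` and `t(G)` are identified with the endpoints of `e`. -/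
noncomputable def endMap (H G : STGraph) (e : H.E) (w : G.V) : H.V ⊕ (H.E × G.Inner) := by
  classical
  exact if h : w = G.s then Sum.inl (H.ends e).1
    else if h' : w = G.t then Sum.inl (H.ends e).2
    else Sum.inr (e, ⟨w, h, h'⟩)

/-- The composition `H ⊘ G`: every edge of `H` is replaced by a copy of `G`, with lengths in the
copy along `e` scaled by `len_H(e)/len(G)`. -/
noncomputable def oslash (H G : STGraph) : STGraph where
  V := H.V ⊕ (H.E × G.Inner)
  E := H.E × G.E
  finV := inferInstance
  finE := inferInstance
  ends := fun p => (endMap H G p.1 (G.ends p.2).1, endMap H G p.1 (G.ends p.2).2)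
  elen := fun p => H.elen p.1 * G.elen p.2 / G.len
  s := Sum.inl H.s
  t := Sum.inl H.t

/-- A single edge of unit length. -/
noncomputable def unitEdge : STGraph where
  V := Bool
  E := Unit
  finV := inferInstance
  finE := inferInstance
  ends := fun _ => (false, true)
  elen := fun _ => 1
  s := false
  t := true

/-- Recursive composition: `G^{⊘0}` is a single unit-length edge and
`G^{⊘k} = G^{⊘(k-1)} ⊘ G`. -/
noncomputable def iterOslash (G : STGraph) : ℕ → STGraph
  | 0 => unitEdge
  | k + 1 => oslash (iterOslash G k) G

end STGraph
section Tilde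

open STGraph

/-- `D` is the diameter of the connected unweighted graph `G`. -/
def IsDiameter {V : Type} (G : SimpleGraph V) (D : ℕ) : Prop :=
  (∀ u v, G.dist u v ≤ D) ∧ ∃ u v, G.dist u v = D

/-- The vertex set of `G̃`: four special vertices `s = Sum.inl 0`, `s' = Sum.inl 1`,
`t' = Sum.inl 2`, `t = Sum.inl 3`, together with the layered vertices `v^{(i)}`. -/
abbrev TVert (V : Type) (D : ℕ) : Type := Fin 4 ⊕ (V × Fin (D + 1))

/-- The edge set of `G̃`: the two edges `(s,s'), (t',t)` of length `3D`; the edges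
`(s', v^{(1)})` and `(v^{(D+1)}, t')` of length `D`; the diagonal edges
`(u^{(i)}, v^{(i+1)})`; the vertical edges `(u^{(j)}, v^{(j)})` (one per unordered edge of
`G`, oriented increasingly); and the edges `(v^{(i)}, v^{(i+1)})`. -/
abbrev TEdge {V : Type} [LinearOrder V] (G : SimpleGraph V) (D : ℕ) : Type :=
  Fin 2 ⊕ ((V ⊕ V) ⊕ (({p : V × V // G.Adj p.1 p.2} × Fin D) ⊕
    (({p : V × V // G.Adj p.1 p.2 ∧ p.1 < p.2} × Fin (D + 1)) ⊕ (V × Fin D))))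

/-- The metric `s`-`t` graph `G̃` built from a finite connected unweighted graph `G`
with diameter `D` (the graph `𝐺⃗` of layers, plus tails `(s,s')`, `(t',t)` of length `3D`). -/
noncomputable def tildeG {V : Type} [Fintype V] [LinearOrder V] (G : SimpleGraph V)
    [DecidableRel G.Adj] (D : ℕ) : STGraph where
  V := TVert V D
  E := TEdge G D
  finV := inferInstance
  finE := inferInstance
  ends := fun e => match e with
    | Sum.inl i => if i = 0 then (Sum.inl 0, Sum.inl 1) else (Sum.inl 2, Sum.inl 3)
    | Sum.inr (Sum.inl (Sum.inl v)) => (Sum.inl 1, Sum.inr (v, 0))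
    | Sum.inr (Sum.inl (Sum.inr v)) => (Sum.inr (v, Fin.last D), Sum.inl 2)
    | Sum.inr (Sum.inr (Sum.inl (p, i))) =>
        (Sum.inr (p.1.1, i.castSucc), Sum.inr (p.1.2, i.succ))
    | Sum.inr (Sum.inr (Sum.inr (Sum.inl (q, j)))) => (Sum.inr (q.1.1, j), Sum.inr (q.1.2, j))
    | Sum.inr (Sum.inr (Sum.inr (Sum.inr (v, i)))) =>
        (Sum.inr (v, i.castSucc), Sum.inr (v, i.succ))
  elen := fun e => match e with
    | Sum.inl _ => 3 * (D : ℝ≥0∞)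
    | Sum.inr (Sum.inl _) => (D : ℝ≥0∞)
    | Sum.inr (Sum.inr _) => 1
  s := Sum.inl 0
  t := Sum.inl 3

/-- A horizontal edge of `G̃` is any edge which is not vertical. -/
def IsHorizontal {V : Type} [LinearOrder V] {G : SimpleGraph V} {D : ℕ} :
    TEdge G D → Prop
  | Sum.inr (Sum.inr (Sum.inr (Sum.inl _))) => False
  | _ => True

end Tilde
section Symmetry

/-- The automorphism group of a simple graph, as a subtype of permutations. -/
abbrev AutG {V : Type} (G : SimpleGraph V) : Type :=
  {π : Equiv.Perm V // ∀ a b, G.Adj (π a) (π b) ↔ G.Adj a b}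

noncomputable instance {V : Type} [Finite V] (G : SimpleGraph V) : Fintype (AutG G) :=
  Fintype.ofFinite _

/-- `G` is vertex-transitive. -/
def VertexTransitive {V : Type} (G : SimpleGraph V) : Prop :=
  ∀ u v : V, ∃ π : AutG G, π.1 u = v

/-- The automorphism `π̃` of `G̃` induced by an automorphism `π` of `G`: it fixes the four
special vertices and maps `v^{(i)}` to `π(v)^{(i)}`. -/
def tildeMap {V : Type} {D : ℕ} (π : Equiv.Perm V) : TVert V D → TVert V D
  | Sum.inl i => Sum.inl i
  | Sum.inr (v, i) => Sum.inr (π v, i)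

/-- The symmetrization `f̄(x) = |Aut(G)|^{-1/2} (f(π̃ x))_{π ∈ Aut(G)}` of a map
`f : V(G̃) → H`, taking values in `ℓ₂(Aut(G); H)`. -/
noncomputable def symHilb {V : Type} [Fintype V] [LinearOrder V] (G : SimpleGraph V) (D : ℕ)
    {H : Type} [NormedAddCommGroup H] [NormedSpace ℝ H] (f : TVert V D → H) :
    TVert V D → PiLp 2 (fun _ : AutG G => H) :=
  fun x => (WithLp.equiv 2 (∀ _ : AutG G, H)).symm
    (fun π => (Real.sqrt (Fintype.card (AutG G)))⁻¹ • f (tildeMap π.1 x))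

/-- The `p`-symmetrization `f̄(x) = |Aut(G)|^{-1/p} (f(π̃ x))_{π ∈ Aut(G)}` of a map
`f : V(G̃) → E`, taking values in the `p`-direct sum `ℓ_p(Aut(G); E)`. -/
noncomputable def symLp {V : Type} [Fintype V] [LinearOrder V] (G : SimpleGraph V) (D : ℕ)
    (p : ℝ) {E : Type} [NormedAddCommGroup E] [NormedSpace ℝ E] (f : TVert V D → E) :
    TVert V D → PiLp (ENNReal.ofReal p) (fun _ : AutG G => E) :=
  fun x => (WithLp.equiv (ENNReal.ofReal p) (∀ _ : AutG G, E)).symm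
    (fun π => ((Fintype.card (AutG G) : ℝ) ^ (-(1/p))) • f (tildeMap π.1 x))

end Symmetry

open scoped ENNReal

section ChainAux

variable {α : Type} (len : α → α → ℝ≥0∞)

lemma chainCost_nil : chainCost len [] = 0 := by rw [chainCost]; simp

lemma chainCost_single (a : α) : chainCost len [a] = 0 := by rw [chainCost]; simp

lemma chainCost_cons_cons (a b : α) (l : List α) :
    chainCost len (a :: b :: l) = len a b + chainCost len (b :: l) := by rw [chainCost]

lemma chainCost_append_le : ∀ (l₁ : List α) (v : α) (t : List α),
    l₁.getLast? = some v →
    chainCost len (l₁ ++ t) ≤ chainCost len l₁ + chainCost len (v :: t)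
  | [], v, t, h => by simp at h
  | [a], v, t, h => by
      simp only [List.getLast?_singleton, Option.some.injEq] at h
      subst h
      simp [chainCost_single]
  | a :: b :: l, v, t, h => by
      rw [List.getLast?_cons_cons] at h
      have ih := chainCost_append_le (b :: l) v t h
      simp only [List.cons_append] at *
      rw [chainCost_cons_cons, chainCost_cons_cons, add_assoc]
      exact add_le_add le_rfl ih

end ChainAux

namespace STGraph

variable (G : STGraph)

lemma lenFn_le {u v : G.V} (e : G.E) (h : G.ends e = (u, v) ∨ G.ends e = (v, u)) :
    G.lenFn u v ≤ G.elen e :=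
  iInf_le (fun e' : {e' : G.E // G.ends e' = (u, v) ∨ G.ends e' = (v, u)} => G.elen e'.1) ⟨e, h⟩

lemma edist_le_chain {u v : G.V} (l : List G.V) (h1 : l.head? = some u)
    (h2 : l.getLast? = some v) : G.edist u v ≤ chainCost G.lenFn l :=
  iInf_le (fun l' : {l' : List G.V // l'.head? = some u ∧ l'.getLast? = some v} =>
    chainCost G.lenFn l'.1) ⟨l, h1, h2⟩

lemma edist_le_lenFn (u v : G.V) : G.edist u v ≤ G.lenFn u v := by
  refine le_trans (G.edist_le_chain [u, v] rfl rfl) ?_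
  rw [chainCost_cons_cons, chainCost_single]
  simp

lemma edist_le_elen {u v : G.V} (e : G.E) (h : G.ends e = (u, v) ∨ G.ends e = (v, u)) :
    G.edist u v ≤ G.elen e := le_trans (G.edist_le_lenFn u v) (G.lenFn_le e h)

lemma edist_self_le (u : G.V) : G.edist u u ≤ 0 := by
  have := G.edist_le_chain [u] rfl rfl
  rwa [chainCost_single] at this

lemma edist_triangle (u v w : G.V) : G.edist u w ≤ G.edist u v + G.edist v w := by
  rw [show G.edist u v = ⨅ l : {l : List G.V // l.head? = some u ∧ l.getLast? = some v},
      chainCost G.lenFn l.1 from rfl, ENNReal.iInf_add]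
  refine le_iInf fun ⟨l₁, h₁, h₁'⟩ => ?_
  rw [show G.edist v w = ⨅ l : {l : List G.V // l.head? = some v ∧ l.getLast? = some w},
      chainCost G.lenFn l.1 from rfl, ENNReal.add_iInf]
  refine le_iInf fun ⟨l₂, h₂, h₂'⟩ => ?_
  obtain ⟨t, rfl⟩ : ∃ t, l₂ = v :: t := by
    cases l₂ with
    | nil => simp at h₂
    | cons x t => simp only [List.head?_cons, Option.some.injEq] at h₂; exact ⟨t, by rw [h₂]⟩
  refine le_trans (G.edist_le_chain (l₁ ++ t) ?_ ?_) (chainCost_append_le _ l₁ v t h₁')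
  · cases l₁ with
    | nil => simp at h₁
    | cons x l => simpa using h₁
  · cases t with
    | nil =>
        simp only [List.getLast?_singleton, Option.some.injEq] at h₂'
        subst h₂'
        simpa using h₁'
    | cons y t' =>
        rw [List.getLast?_append_cons]
        rw [List.getLast?_cons_cons] at h₂'
        exact h₂'

end STGraph

section TildeAux

open STGraph

variable {V : Type} [Fintype V] [LinearOrder V] (G : SimpleGraph V) [DecidableRel G.Adj]
  (D : ℕ)

lemma tilde_elen_ne_top (e : TEdge G D) : (tildeG G D).elen e ≠ ⊤ := by
  rcases e with i | e
  · simp only [tildeG]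
    exact ENNReal.mul_ne_top (by norm_num) (ENNReal.natCast_ne_top D)
  · rcases e with e | e
    · simp only [tildeG]
      exact ENNReal.natCast_ne_top D
    · simp [tildeG]

lemma tilde_one_le_elen (hD : 1 ≤ D) (e : TEdge G D) : 1 ≤ (tildeG G D).elen e := by
  have hD1 : (1 : ℝ≥0∞) ≤ (D : ℝ≥0∞) := by exact_mod_cast Nat.one_le_cast.mpr hD
  rcases e with i | e
  · refine le_trans hD1 ?_
    simp only [tildeG]
    calc (D : ℝ≥0∞) = 1 * D := (one_mul _).symm
    _ ≤ 3 * D := by gcongr <;> norm_num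
  · rcases e with e | e
    · exact le_trans hD1 (by simp [tildeG])
    · simp [tildeG]

lemma tilde_ends_ne (e : TEdge G D) :
    ((tildeG G D).ends e).1 ≠ ((tildeG G D).ends e).2 := by
  rcases e with i | (⟨v⟩ | ⟨v⟩) | ⟨⟨p, hp⟩, i⟩ | ⟨⟨p, hp⟩, j⟩ | ⟨v, i⟩
  · by_cases hi : i = 0 <;> simp [tildeG, hi]
  · simp [tildeG]
  · simp [tildeG]
  · have : p.1 ≠ p.2 := hp.ne
    simp only [tildeG]
    intro h
    injection h with h'
    obtain ⟨h1, h2⟩ := Prod.mk.injEq .. ▸ h'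
    exact absurd (Fin.castSucc_lt_succ (i := i)).ne (by rw [Prod.mk.injEq] at h'; exact h'.2 ▸ (by simp [h'.2]))
  · have : p.1 ≠ p.2 := hp.2.ne
    simp only [tildeG]
    intro h
    injection h with h'
    rw [Prod.mk.injEq] at h'
    exact this h'.1
  · simp only [tildeG]
    intro h
    injection h with h'
    rw [Prod.mk.injEq] at h'
    exact absurd h'.2 (Fin.castSucc_lt_succ (i := i)).ne

end TildeAux

section TildeDist

open STGraph

variable {V : Type} [Fintype V] [LinearOrder V] (G : SimpleGraph V) [DecidableRel G.Adj]
  {D : ℕ}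

lemma tilde_one_le_lenFn (hD : 1 ≤ D) (u v : TVert V D) : 1 ≤ (tildeG G D).lenFn u v :=
  le_iInf fun e => tilde_one_le_elen G D hD e.1

lemma tilde_one_le_edist (hD : 1 ≤ D) {u v : TVert V D} (h : u ≠ v) :
    1 ≤ (tildeG G D).edist u v := by
  refine le_iInf fun ⟨l, h1, h2⟩ => ?_
  match l, h1, h2 with
  | [], h1, h2 => simp at h1
  | [a], h1, h2 =>
      simp only [List.head?_cons, List.getLast?_singleton, Option.some.injEq] at h1 h2
      exact absurd (Option.some.inj (h1.symm.trans h2)) h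
  | a :: b :: l, h1, h2 =>
      calc (1 : ℝ≥0∞) ≤ (tildeG G D).lenFn a b := tilde_one_le_lenFn G hD a b
      _ ≤ _ := by rw [chainCost_cons_cons]; exact le_self_add

/-- Potential function certifying the lower bound `9D` on `d(s,t)`. -/
noncomputable def tpot (V : Type) (D : ℕ) : TVert V D → ℝ≥0∞
  | Sum.inl i => if i = 0 then 0 else if i = 1 then 3 * D else if i = 2 then 6 * D else 9 * D
  | Sum.inr (_, i) => 4 * D + i

lemma tpot_edge (e : TEdge G D) :
    tpot V D ((tildeG G D).ends e).2 ≤ tpot V D ((tildeG G D).ends e).1 + (tildeG G D).elen e ∧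
    tpot V D ((tildeG G D).ends e).1 ≤ tpot V D ((tildeG G D).ends e).2 + (tildeG G D).elen e := by
  have hD : (D : ℝ≥0∞) ≠ ⊤ := ENNReal.natCast_ne_top D
  rcases e with i | (⟨v⟩ | ⟨v⟩) | ⟨⟨p, hp⟩, i⟩ | ⟨⟨p, hp⟩, j⟩ | ⟨v, i⟩
  · by_cases hi : i = 0
    · simp only [tildeG, hi, if_pos rfl, tpot]
      norm_num
    · have : ¬((3 : Fin 4) = 0) := by decide
      simp only [tildeG, hi, if_neg, tpot]
      norm_num
      constructor
      · calc (9 : ℝ≥0∞) * D = 6 * D + 3 * D := by ring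
          _ ≤ _ := le_refl _
      · calc (6 : ℝ≥0∞) * D ≤ 9 * D := by gcongr <;> norm_num
          _ ≤ 9 * D + 3 * D := le_self_add
  · simp only [tildeG, tpot]
    norm_num
    constructor
    · calc (4 : ℝ≥0∞) * D = 3 * D + D := by ring
        _ ≤ _ := le_refl _
    · calc (3 : ℝ≥0∞) * D ≤ 4 * D := by gcongr <;> norm_num
        _ ≤ 4 * D + D := le_self_add
  · simp only [tildeG, tpot, Fin.val_last]
    norm_num
    constructor
    · calc (6 : ℝ≥0∞) * D = 4 * D + D + D := by ring
        _ ≤ _ := le_refl _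
    · rw [if_neg (by decide), if_neg (by decide)]
      gcongr <;> norm_num
  · simp only [tildeG, tpot, Fin.coe_castSucc, Fin.val_succ]
    push_cast
    constructor
    · calc (4 : ℝ≥0∞) * D + (i + 1) = 4 * D + i + 1 := by ring
        _ ≤ _ := le_refl _
    · calc (4 : ℝ≥0∞) * D + i ≤ 4 * D + (i + 1) := by gcongr; exact le_self_add
        _ ≤ 4 * D + (i + 1) + 1 := le_self_add
  · simp only [tildeG, tpot]
    exact ⟨le_self_add, le_self_add⟩
  · simp only [tildeG, tpot, Fin.coe_castSucc, Fin.val_succ]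
    push_cast
    constructor
    · calc (4 : ℝ≥0∞) * D + (i + 1) = 4 * D + i + 1 := by ring
        _ ≤ _ := le_refl _
    · calc (4 : ℝ≥0∞) * D + i ≤ 4 * D + (i + 1) := by gcongr; exact le_self_add
        _ ≤ 4 * D + (i + 1) + 1 := le_self_add

lemma tpot_lenFn (a b : TVert V D) :
    tpot V D b ≤ tpot V D a + (tildeG G D).lenFn a b := by
  unfold lenFn
  rw [ENNReal.add_iInf]
  refine le_iInf fun ⟨e, he⟩ => ?_
  rcases he with he | he
  · have := (tpot_edge G e).1
    rw [he] at this
    exact this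
  · have := (tpot_edge G e).2
    rw [he] at this
    exact this

lemma tpot_chain : ∀ (l : List (TVert V D)) (a v : TVert V D),
    l.head? = some a → l.getLast? = some v →
    tpot V D v ≤ tpot V D a + chainCost (tildeG G D).lenFn l
  | [], a, v, h1, h2 => by simp at h1
  | [x], a, v, h1, h2 => by
      simp only [List.head?_cons, List.getLast?_singleton, Option.some.injEq] at h1 h2
      subst h1; subst h2
      simp [chainCost_single]
  | x :: b :: l, a, v, h1, h2 => by
      simp only [List.head?_cons, Option.some.injEq] at h1
      subst h1
      rw [List.getLast?_cons_cons] at h2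
      have ih := tpot_chain (b :: l) b v rfl h2
      erw [chainCost_cons_cons, ← add_assoc]
      calc tpot V D v ≤ tpot V D b + chainCost (tildeG G D).lenFn (b :: l) := ih
        _ ≤ (tpot V D x + (tildeG G D).lenFn x b) + chainCost (tildeG G D).lenFn (b :: l) :=
            add_le_add (tpot_lenFn G x b) le_rfl
        _ = _ := rfl

lemma tilde_edist_st_lower :
    (9 * D : ℝ≥0∞) ≤ (tildeG G D).edist (Sum.inl 0) (Sum.inl 3) := by
  refine le_iInf fun ⟨l, h1, h2⟩ => ?_
  have := tpot_chain G l (Sum.inl 0) (Sum.inl 3) h1 h2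
  simpa [tpot] using this

end TildeDist

section TildeUpper

open STGraph

variable {V : Type} [Fintype V] [LinearOrder V] (G : SimpleGraph V) [DecidableRel G.Adj]
  {D : ℕ}

lemma tilde_column_edist (w : V) :
    ∀ k (hk : k ≤ D), (tildeG G D).edist (Sum.inr (w, ⟨0, Nat.succ_pos D⟩))
      (Sum.inr (w, ⟨k, Nat.lt_succ_of_le hk⟩)) ≤ (k : ℝ≥0∞)
  | 0, hk => by simpa using (tildeG G D).edist_self_le _
  | (k+1), hk => by
      have hkD : k < D := hk
      have step : (tildeG G D).edist (Sum.inr (w, ⟨k, Nat.lt_succ_of_le hkD.le⟩))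
          (Sum.inr (w, ⟨k + 1, Nat.lt_succ_of_le hk⟩)) ≤ 1 := by
        have := (tildeG G D).edist_le_elen
          (e := Sum.inr (Sum.inr (Sum.inr (Sum.inr (w, ⟨k, hkD⟩)))))
          (u := Sum.inr (w, ⟨k, Nat.lt_succ_of_le hkD.le⟩))
          (v := Sum.inr (w, ⟨k + 1, Nat.lt_succ_of_le hk⟩))
        simp only [tildeG] at this ⊢
        exact this (Or.inl rfl)
      calc (tildeG G D).edist _ _
          ≤ (tildeG G D).edist (Sum.inr (w, ⟨0, Nat.succ_pos D⟩))
              (Sum.inr (w, ⟨k, Nat.lt_succ_of_le hkD.le⟩)) + _ :=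
            (tildeG G D).edist_triangle _ _ _
        _ ≤ (k : ℝ≥0∞) + 1 := add_le_add (tilde_column_edist w k hkD.le) step
        _ = ((k + 1 : ℕ) : ℝ≥0∞) := by push_cast; ring

lemma tilde_edist_st_upper (hD : 1 ≤ D) (w : V) :
    (tildeG G D).edist (Sum.inl 0) (Sum.inl 3) ≤ (9 * D : ℝ≥0∞) := by
  have h1 : (tildeG G D).edist (Sum.inl 0) (Sum.inl 1) ≤ 3 * D := by
    have := (tildeG G D).edist_le_elen (e := (Sum.inl 0 : TEdge G D))
      (u := (Sum.inl 0 : TVert V D)) (v := Sum.inl 1)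
    simp only [tildeG, if_pos rfl] at this ⊢
    exact this (Or.inl rfl)
  have h2 : (tildeG G D).edist (Sum.inl 1) (Sum.inr (w, ⟨0, Nat.succ_pos D⟩)) ≤ (D : ℝ≥0∞) := by
    have := (tildeG G D).edist_le_elen (e := (Sum.inr (Sum.inl (Sum.inl w)) : TEdge G D))
      (u := (Sum.inl 1 : TVert V D)) (v := Sum.inr (w, ⟨0, Nat.succ_pos D⟩))
    simp only [tildeG] at this ⊢
    exact this (Or.inl rfl)
  have h3 := tilde_column_edist G w D le_rfl
  have h4 : (tildeG G D).edist (Sum.inr (w, ⟨D, Nat.lt_succ_of_le le_rfl⟩)) (Sum.inl 2)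
      ≤ (D : ℝ≥0∞) := by
    have := (tildeG G D).edist_le_elen (e := (Sum.inr (Sum.inl (Sum.inr w)) : TEdge G D))
      (u := (Sum.inr (w, ⟨D, Nat.lt_succ_of_le le_rfl⟩) : TVert V D)) (v := Sum.inl 2)
    simp only [tildeG] at this ⊢
    refine this (Or.inl ?_)
    have : Fin.last D = ⟨D, Nat.lt_succ_of_le le_rfl⟩ := rfl
    rw [this]
  have h5 : (tildeG G D).edist (Sum.inl 2) (Sum.inl 3) ≤ 3 * D := by
    have := (tildeG G D).edist_le_elen (e := (Sum.inl 1 : TEdge G D))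
      (u := (Sum.inl 2 : TVert V D)) (v := Sum.inl 3)
    have h10 : ¬((1 : Fin 2) = 0) := by decide
    simp only [tildeG, if_neg h10] at this ⊢
    exact this (Or.inl trivial)
  calc (tildeG G D).edist (Sum.inl 0) (Sum.inl 3)
      ≤ (tildeG G D).edist (Sum.inl 0) (Sum.inl 1) +
        (tildeG G D).edist (Sum.inl 1) (Sum.inl 3) := (tildeG G D).edist_triangle _ _ _
    _ ≤ (tildeG G D).edist (Sum.inl 0) (Sum.inl 1) +
        ((tildeG G D).edist (Sum.inl 1) (Sum.inr (w, ⟨0, Nat.succ_pos D⟩)) +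
          (tildeG G D).edist (Sum.inr (w, ⟨0, Nat.succ_pos D⟩)) (Sum.inl 3)) := by
          gcongr
          exact (tildeG G D).edist_triangle _ _ _
    _ ≤ (tildeG G D).edist (Sum.inl 0) (Sum.inl 1) +
        ((tildeG G D).edist (Sum.inl 1) (Sum.inr (w, ⟨0, Nat.succ_pos D⟩)) +
          ((tildeG G D).edist (Sum.inr (w, ⟨0, Nat.succ_pos D⟩))
              (Sum.inr (w, ⟨D, Nat.lt_succ_of_le le_rfl⟩)) +
            ((tildeG G D).edist (Sum.inr (w, ⟨D, Nat.lt_succ_of_le le_rfl⟩)) (Sum.inl 2) +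
              (tildeG G D).edist (Sum.inl 2) (Sum.inl 3)))) := by
          gcongr
          calc (tildeG G D).edist (Sum.inr (w, ⟨0, Nat.succ_pos D⟩)) (Sum.inl 3)
              ≤ _ + _ := (tildeG G D).edist_triangle _ (Sum.inr (w, ⟨D, Nat.lt_succ_of_le le_rfl⟩)) _
            _ ≤ _ := by
                gcongr
                exact (tildeG G D).edist_triangle _ (Sum.inl 2) _
    _ ≤ 3 * D + ((D : ℝ≥0∞) + ((D : ℝ≥0∞) + ((D : ℝ≥0∞) + 3 * D))) := by
          gcongr
    _ = 9 * D := by ring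

end TildeUpper

section SymAux

open scoped RealInnerProductSpace

variable {V : Type} [Fintype V] [LinearOrder V] (G : SimpleGraph V) [DecidableRel G.Adj]
  (D : ℕ) {H : Type} [NormedAddCommGroup H] [InnerProductSpace ℝ H]

lemma tildeMap_comp (σ π : Equiv.Perm V) (x : TVert V D) :
    tildeMap σ (tildeMap π x) = tildeMap (σ * π) x := by
  rcases x with i | ⟨v, i⟩ <;> rfl

/-- Right multiplication by an automorphism, as an equivalence of `AutG G`. -/
def autMulRight (π : AutG G) : AutG G ≃ AutG G where
  toFun σ := ⟨σ.1 * π.1, fun a b => by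
    simpa [Equiv.Perm.mul_apply] using (σ.2 (π.1 a) (π.1 b)).trans (π.2 a b)⟩
  invFun σ := ⟨σ.1 * π.1⁻¹, fun a b => by
    have hπ := π.2 (π.1⁻¹ a) (π.1⁻¹ b)
    simp only [← Equiv.Perm.mul_apply, mul_inv_cancel, Equiv.Perm.one_apply] at hπ
    simpa [Equiv.Perm.mul_apply] using (σ.2 (π.1⁻¹ a) (π.1⁻¹ b)).trans hπ.symm⟩
  left_inv σ := by ext : 1; simp [mul_assoc]
  right_inv σ := by ext : 1; simp [mul_assoc]

lemma symHilb_inner (f : TVert V D → H) (π : AutG G) (x y : TVert V D) :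
    ⟪symHilb G D f (tildeMap π.1 x), symHilb G D f (tildeMap π.1 y)⟫ =
      ⟪symHilb G D f x, symHilb G D f y⟫ := by
  classical
  simp only [symHilb, PiLp.inner_apply, WithLp.equiv_symm_apply, PiLp.toLp_apply]
  refine Fintype.sum_equiv (autMulRight G π) _ _ fun σ => ?_
  simp only [autMulRight, Equiv.coe_fn_mk, tildeMap_comp]

lemma symHilb_norm (f : TVert V D → H) (π : AutG G) (x y : TVert V D) :
    ‖symHilb G D f (tildeMap π.1 x) - symHilb G D f (tildeMap π.1 y)‖ =
      ‖symHilb G D f x - symHilb G D f y‖ := by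
  have key : ∀ a b : TVert V D,
      ‖symHilb G D f a - symHilb G D f b‖ ^ 2 =
        ⟪symHilb G D f a, symHilb G D f a⟫ - 2 * ⟪symHilb G D f a, symHilb G D f b⟫ +
          ⟪symHilb G D f b, symHilb G D f b⟫ := by
    intro a b
    rw [← real_inner_self_eq_norm_sq, inner_sub_sub_self,
      real_inner_comm (symHilb G D f b) (symHilb G D f a)]
    ring
  have h2 : ‖symHilb G D f (tildeMap π.1 x) - symHilb G D f (tildeMap π.1 y)‖ ^ 2 =
      ‖symHilb G D f x - symHilb G D f y‖ ^ 2 := by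
    rw [key, key, symHilb_inner, symHilb_inner, symHilb_inner]
  rw [← Real.sqrt_sq (norm_nonneg (symHilb G D f (tildeMap π.1 x) - symHilb G D f (tildeMap π.1 y))),
    ← Real.sqrt_sq (norm_nonneg (symHilb G D f x - symHilb G D f y)), h2]

end SymAux

section HilbAux

open scoped RealInnerProductSpace

variable {F : Type} [NormedAddCommGroup F] [InnerProductSpace ℝ F]

/-- Pythagoras along a unit vector. -/
lemma proj_pyth (e v : F) (he : ‖e‖ = 1) :
    ⟪v, e⟫ ^ 2 + ‖v - ⟪v, e⟫ • e‖ ^ 2 = ‖v‖ ^ 2 := by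
  have h := norm_sub_sq_real v (⟪v, e⟫ • e)
  rw [real_inner_smul_right] at h
  rw [h, norm_smul]
  simp [he, abs_sq]
  ring

/-- The key projection step: if two `β`-separated points having equal projections along a
unit vector `e` are both within distance `M` of a point `x`, then the displacement of either
of them from `x` along `e` is at most `√(M² − β²/4)`. -/
lemma proj_step {β M : ℝ} (hβ : 0 ≤ β) (e q₁ q₂ x : F) (he : ‖e‖ = 1) (horth : ⟪q₁ - q₂, e⟫ = 0)
    (hsep : β ≤ ‖q₁ - q₂‖) (h₁ : ‖q₁ - x‖ ≤ M) (h₂ : ‖q₂ - x‖ ≤ M) :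
    ⟪q₁ - x, e⟫ ^ 2 + β ^ 2 / 4 ≤ M ^ 2 := by
  set t := ⟪q₁ - x, e⟫ with ht
  have hteq : ⟪q₂ - x, e⟫ = t := by
    have : ⟪q₁ - x, e⟫ - ⟪q₂ - x, e⟫ = 0 := by
      rw [← inner_sub_left]
      simpa using horth
    linarith [this]
  set P₁ := (q₁ - x) - t • e with hP₁
  set P₂ := (q₂ - x) - t • e with hP₂
  have hdiff : P₁ - P₂ = q₁ - q₂ := by rw [hP₁, hP₂]; abel
  have hsum : β ≤ ‖P₁‖ + ‖P₂‖ := by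
    calc β ≤ ‖q₁ - q₂‖ := hsep
      _ = ‖P₁ - P₂‖ := by rw [hdiff]
      _ ≤ ‖P₁‖ + ‖P₂‖ := norm_sub_le _ _
  have hMnn : 0 ≤ M := le_trans (norm_nonneg _) h₁
  have e₁ : t ^ 2 + ‖P₁‖ ^ 2 = ‖q₁ - x‖ ^ 2 := by rw [hP₁]; exact proj_pyth e (q₁ - x) he
  have e₂ : t ^ 2 + ‖P₂‖ ^ 2 = ‖q₂ - x‖ ^ 2 := by
    rw [hP₂, ← hteq]; exact proj_pyth e (q₂ - x) he
  rcases le_total ‖P₁‖ ‖P₂‖ with hc | hc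
  · have hb : β / 2 ≤ ‖P₂‖ := by linarith
    have : (β / 2) ^ 2 ≤ ‖P₂‖ ^ 2 := by
      have hb2 : 0 ≤ ‖P₂‖ := norm_nonneg _
      nlinarith
    nlinarith [sq_nonneg ‖q₂ - x‖, norm_nonneg (q₂ - x)]
  · have hb : β / 2 ≤ ‖P₁‖ := by linarith
    have : (β / 2) ^ 2 ≤ ‖P₁‖ ^ 2 := by
      have hb2 : 0 ≤ ‖P₁‖ := norm_nonneg _
      nlinarith
    nlinarith [sq_nonneg ‖q₁ - x‖, norm_nonneg (q₁ - x)]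

end HilbAux

/-- The closing scalar inequality: `8√(L² + q/9) + √(L² − 8q/9) ≤ 9L`. -/
lemma endgame_ineq {L q : ℝ} (hq : 0 < q) (hL : 8 * q / 9 < L ^ 2) (hL0 : 0 < L) :
    8 * Real.sqrt (L ^ 2 + q / 9) + Real.sqrt (L ^ 2 - 8 * q / 9) ≤ 9 * L := by
  have ha : Real.sqrt (L ^ 2 + q / 9) ≤ (18 * L ^ 2 + q) / (18 * L) := by
    rw [show L ^ 2 + q / 9 = ((18 * L ^ 2 + q) / (18 * L)) ^ 2 - (q / (18 * L)) ^ 2 by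
      field_simp; ring]
    calc Real.sqrt (((18 * L ^ 2 + q) / (18 * L)) ^ 2 - (q / (18 * L)) ^ 2)
        ≤ Real.sqrt (((18 * L ^ 2 + q) / (18 * L)) ^ 2) := by
          apply Real.sqrt_le_sqrt; nlinarith [sq_nonneg (q / (18 * L))]
      _ = (18 * L ^ 2 + q) / (18 * L) := by
          rw [Real.sqrt_sq]; positivity
  have hb : Real.sqrt (L ^ 2 - 8 * q / 9) ≤ (9 * L ^ 2 - 4 * q) / (9 * L) := by
    have hnum : 0 ≤ 9 * L ^ 2 - 4 * q := by nlinarith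
    rw [show L ^ 2 - 8 * q / 9 = ((9 * L ^ 2 - 4 * q) / (9 * L)) ^ 2 - (4 * q / (9 * L)) ^ 2 by
      field_simp; ring]
    calc Real.sqrt (((9 * L ^ 2 - 4 * q) / (9 * L)) ^ 2 - (4 * q / (9 * L)) ^ 2)
        ≤ Real.sqrt (((9 * L ^ 2 - 4 * q) / (9 * L)) ^ 2) := by
          apply Real.sqrt_le_sqrt; nlinarith [sq_nonneg (4 * q / (9 * L))]
      _ = (9 * L ^ 2 - 4 * q) / (9 * L) := by
          rw [Real.sqrt_sq]; positivity
  calc 8 * Real.sqrt (L ^ 2 + q / 9) + Real.sqrt (L ^ 2 - 8 * q / 9)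
      ≤ 8 * ((18 * L ^ 2 + q) / (18 * L)) + (9 * L ^ 2 - 4 * q) / (9 * L) := by
        have h8 : (0:ℝ) ≤ 8 := by norm_num
        gcongr
    _ = 9 * L := by field_simp; ring

open scoped RealInnerProductSpace

open Fin.NatCast

open STGraph in
/-- Stretch lemma: let `G` be vertex-transitive with diameter `D ≥ 1`, `f : V(G̃) → H` an
injective map into a real Hilbert space and `f̄` its symmetrization.  If for every layer
`i ∈ [D+1]` there is an edge `(u,v)` of `G` with `‖f̄(u^{(i)}) − f̄(v^{(i)})‖ ≥ β`, then some
horizontal edge `(x,y)` of `G̃` satisfies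
`‖f̄(x) − f̄(y)‖²/d(x,y)² ≥ ‖f̄(s) − f̄(t)‖²/d(s,t)² + β²/36`. -/
theorem stretch_lemma {V : Type} [Fintype V] [LinearOrder V] (G : SimpleGraph V)
    [DecidableRel G.Adj] (hconn : G.Connected) (D : ℕ) (hD : 1 ≤ D)
    (hdiam : IsDiameter G D) (htrans : VertexTransitive G)
    (H : Type) [NormedAddCommGroup H] [InnerProductSpace ℝ H] [CompleteSpace H]
    (f : TVert V D → H) (hf : Function.Injective f) (β : ℝ) (hβ : 0 < β)
    (hvert : ∀ i : Fin (D + 1), ∃ u v : V, G.Adj u v ∧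
      β ≤ ‖symHilb G D f (Sum.inr (u, i)) - symHilb G D f (Sum.inr (v, i))‖) :
    ∃ e : TEdge G D, IsHorizontal e ∧
      ‖symHilb G D f (Sum.inl 0) - symHilb G D f (Sum.inl 3)‖ ^ 2 /
          (((tildeG G D).edist (Sum.inl 0) (Sum.inl 3)).toReal) ^ 2 + β ^ 2 / 36 ≤
        ‖symHilb G D f ((tildeG G D).ends e).1 - symHilb G D f ((tildeG G D).ends e).2‖ ^ 2 /
          (((tildeG G D).edist ((tildeG G D).ends e).1 ((tildeG G D).ends e).2).toReal) ^ 2 := by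
  classical
  by_contra hcon
  push_neg at hcon
  obtain ⟨w0⟩ := hconn.nonempty
  obtain ⟨g, hgdef⟩ : ∃ g', g' = symHilb G D f := ⟨_, rfl⟩
  rw [← hgdef] at hcon hvert
  obtain ⟨N, hNdef⟩ : ∃ N', N' = ‖g (Sum.inl 0) - g (Sum.inl 3)‖ := ⟨_, rfl⟩
  rw [← hNdef] at hcon
  -- the distance from s to t is 9D
  have hst : (tildeG G D).edist (Sum.inl 0) (Sum.inl 3) = (9 * D : ℝ≥0∞) :=
    le_antisymm (tilde_edist_st_upper G hD w0) (tilde_edist_st_lower G)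
  have hρ : ((tildeG G D).edist (Sum.inl 0) (Sum.inl 3)).toReal = 9 * (D : ℝ) := by
    rw [hst]
    simp [ENNReal.toReal_mul]
  rw [hρ] at hcon
  have hD1 : (1 : ℝ) ≤ (D : ℝ) := by exact_mod_cast hD
  have hDpos : (0 : ℝ) < (D : ℝ) := by linarith
  obtain ⟨T, hT⟩ : ∃ T', T' = N ^ 2 / (9 * (D : ℝ)) ^ 2 + β ^ 2 / 36 := ⟨_, rfl⟩
  rw [← hT] at hcon
  have hTpos : 0 < T := by
    have h1 : 0 < β ^ 2 / 36 := by positivity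
    have h0 : 0 ≤ N ^ 2 / (9 * (D : ℝ)) ^ 2 := by positivity
    rw [hT]; linarith
  obtain ⟨S, hS⟩ : ∃ S', S' = Real.sqrt T := ⟨_, rfl⟩
  have hSpos : 0 < S := by rw [hS]; exact Real.sqrt_pos.mpr hTpos
  have hS2 : S ^ 2 = T := by rw [hS]; exact Real.sq_sqrt hTpos.le
  -- per-edge bound coming from the negated conclusion
  have hedge : ∀ e : TEdge G D, IsHorizontal e →
      ‖g ((tildeG G D).ends e).1 - g ((tildeG G D).ends e).2‖ <
        S * ((tildeG G D).elen e).toReal := by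
    intro e he
    have hne := tilde_ends_ne G D e
    have h2 : (tildeG G D).edist ((tildeG G D).ends e).1 ((tildeG G D).ends e).2 ≤
        (tildeG G D).elen e :=
      (tildeG G D).edist_le_elen e (Or.inl Prod.mk.eta)
    have hdfin : (tildeG G D).edist ((tildeG G D).ends e).1 ((tildeG G D).ends e).2 ≠ ⊤ :=
      ne_top_of_le_ne_top (tilde_elen_ne_top G D e) h2
    set d := ((tildeG G D).edist ((tildeG G D).ends e).1 ((tildeG G D).ends e).2).toReal with hd
    have hd1 : (1 : ℝ) ≤ d := by
      have := ENNReal.toReal_mono hdfin (tilde_one_le_edist G hD hne)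
      simpa using this
    have hdle : d ≤ ((tildeG G D).elen e).toReal :=
      ENNReal.toReal_mono (tilde_elen_ne_top G D e) h2
    have hcon' := hcon e he
    have hd0 : (0 : ℝ) < d := by linarith
    have h3 : ‖g ((tildeG G D).ends e).1 - g ((tildeG G D).ends e).2‖ ^ 2 < T * d ^ 2 := by
      rw [div_lt_iff₀ (by positivity)] at hcon'
      exact hcon'
    have h4 : ‖g ((tildeG G D).ends e).1 - g ((tildeG G D).ends e).2‖ < S * d := by
      refine lt_of_pow_lt_pow_left₀ 2 (by positivity) ?_
      rw [mul_pow, hS2]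
      exact h3
    exact lt_of_lt_of_le h4 (mul_le_mul_of_nonneg_left hdle hSpos.le)
  -- every vertex has a β-separated neighbour at every layer
  have hpartner : ∀ (i : Fin (D + 1)) (w : V), ∃ z, G.Adj w z ∧
      β ≤ ‖g (Sum.inr (w, i)) - g (Sum.inr (z, i))‖ := by
    intro i w
    obtain ⟨u, v, huv, hb⟩ := hvert i
    obtain ⟨π, hπ⟩ := htrans u w
    refine ⟨π.1 v, ?_, ?_⟩
    · rw [← hπ]; exact (π.2 u v).mpr huv
    · have h1 : β ≤ ‖g (tildeMap π.1 (Sum.inr (u, i))) - g (tildeMap π.1 (Sum.inr (v, i)))‖ := by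
        rw [hgdef, symHilb_norm G D f π, ← hgdef]
        exact hb
      rw [show tildeMap π.1 (Sum.inr (u, i)) = (Sum.inr (w, i) : TVert V D) by
          subst hπ; rfl] at h1
      exact h1
  obtain ⟨L, hLdef⟩ : ∃ L', L' = N / (9 * (D : ℝ)) := ⟨_, rfl⟩
  have hLnn : 0 ≤ L := by rw [hLdef, hNdef]; positivity
  have hTL : T = L ^ 2 + β ^ 2 / 4 / 9 := by rw [hT, hLdef, div_pow]; ring
  by_cases hcase : L ^ 2 ≤ 8 * (β ^ 2 / 4) / 9
  · -- CASE A : small s-t stretch; a unit horizontal edge already beats β/2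
    have hTq : T ≤ β ^ 2 / 4 := by rw [hTL]; linarith
    have hSb : S ≤ β / 2 := by
      rw [hS]
      calc Real.sqrt T ≤ Real.sqrt (β ^ 2 / 4) := Real.sqrt_le_sqrt hTq
        _ = β / 2 := by
            rw [show β ^ 2 / 4 = (β / 2) ^ 2 by ring, Real.sqrt_sq (by positivity)]
    have h1D : 1 < D + 1 := by omega
    have h0D : 0 < D + 1 := by omega
    obtain ⟨z, hz, hzb⟩ := hpartner ⟨1, h1D⟩ w0
    have hcol := hedge (Sum.inr (Sum.inr (Sum.inr (Sum.inr (w0, ⟨0, hD⟩))))) trivial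
    have hdiag := hedge (Sum.inr (Sum.inr (Sum.inl (⟨(w0, z), hz⟩, ⟨0, hD⟩)))) trivial
    simp only [tildeG] at hcol hdiag
    rw [ENNReal.toReal_one, mul_one] at hcol hdiag
    have hcol' : ‖g (Sum.inr (w0, (⟨0, h0D⟩ : Fin (D + 1)))) -
        g (Sum.inr (w0, (⟨1, h1D⟩ : Fin (D + 1))))‖ < S := hcol
    have hdiag' : ‖g (Sum.inr (w0, (⟨0, h0D⟩ : Fin (D + 1)))) -
        g (Sum.inr (z, (⟨1, h1D⟩ : Fin (D + 1))))‖ < S := hdiag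
    have htri : ‖g (Sum.inr (w0, (⟨1, h1D⟩ : Fin (D + 1)))) - g (Sum.inr (z, ⟨1, h1D⟩))‖ ≤
        ‖g (Sum.inr (w0, (⟨1, h1D⟩ : Fin (D + 1)))) - g (Sum.inr (w0, ⟨0, h0D⟩))‖ +
        ‖g (Sum.inr (w0, (⟨0, h0D⟩ : Fin (D + 1)))) - g (Sum.inr (z, ⟨1, h1D⟩))‖ := by
      have hsp : g (Sum.inr (w0, (⟨1, h1D⟩ : Fin (D + 1)))) - g (Sum.inr (z, ⟨1, h1D⟩)) =
          (g (Sum.inr (w0, (⟨1, h1D⟩ : Fin (D + 1)))) - g (Sum.inr (w0, ⟨0, h0D⟩))) +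
          (g (Sum.inr (w0, (⟨0, h0D⟩ : Fin (D + 1)))) - g (Sum.inr (z, ⟨1, h1D⟩))) := by abel
      rw [hsp]
      exact norm_add_le _ _
    have hrev : ‖g (Sum.inr (w0, (⟨1, h1D⟩ : Fin (D + 1)))) - g (Sum.inr (w0, ⟨0, h0D⟩))‖ =
        ‖g (Sum.inr (w0, (⟨0, h0D⟩ : Fin (D + 1)))) - g (Sum.inr (w0, ⟨1, h1D⟩))‖ :=
      norm_sub_rev _ _
    linarith
  · -- CASE B : the path argument
    push_neg at hcase
    have hq : (0 : ℝ) < β ^ 2 / 4 := by positivity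
    have hL2 : 0 < L ^ 2 := lt_trans (by positivity) hcase
    have hL0 : 0 < L := lt_of_le_of_ne hLnn (by intro h; rw [← h] at hL2; simp at hL2)
    have hNpos : 0 < N := by
      rcases lt_or_ge 0 N with h | h
      · exact h
      · exfalso
        have hN0 : N = 0 := le_antisymm h (by rw [hNdef]; positivity)
        rw [hN0, zero_div] at hLdef
        rw [hLdef] at hL0
        exact lt_irrefl 0 hL0
    have hgne : g (Sum.inl 3) - g (Sum.inl 0) ≠ 0 := by
      intro h0
      have h1 : N = 0 := by rw [hNdef, norm_sub_rev, h0, norm_zero]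
      linarith
    obtain ⟨e0, he0def⟩ : ∃ e0' : PiLp 2 (fun _ : AutG G => H),
        e0' = ‖g (Sum.inl 3) - g (Sum.inl 0)‖⁻¹ • (g (Sum.inl 3) - g (Sum.inl 0)) := ⟨_, rfl⟩
    have he0 : ‖e0‖ = 1 := by rw [he0def]; exact norm_smul_inv_norm hgne
    obtain ⟨φ, hφdef⟩ : ∃ φ' : TVert V D → ℝ, φ' = fun x => ⟪g x, e0⟫ := ⟨_, rfl⟩
    have hφtil : ∀ (π : AutG G) (x : TVert V D), φ (tildeMap π.1 x) = φ x := by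
      intro π x
      have h3 : ⟪symHilb G D f (tildeMap π.1 x), symHilb G D f (Sum.inl 3)⟫ =
          ⟪symHilb G D f x, symHilb G D f (Sum.inl 3)⟫ :=
        symHilb_inner G D f π x (Sum.inl 3)
      have h0 : ⟪symHilb G D f (tildeMap π.1 x), symHilb G D f (Sum.inl 0)⟫ =
          ⟪symHilb G D f x, symHilb G D f (Sum.inl 0)⟫ :=
        symHilb_inner G D f π x (Sum.inl 0)
      simp only [hφdef, he0def, real_inner_smul_right, inner_sub_right, hgdef]
      rw [h3, h0]
    have hφinv : ∀ (i : Fin (D + 1)) (u v : V), φ (Sum.inr (u, i)) = φ (Sum.inr (v, i)) := by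
      intro i u v
      obtain ⟨π, hπ⟩ := htrans u v
      have h1 := hφtil π (Sum.inr (u, i))
      rw [show tildeMap π.1 (Sum.inr (u, i)) = (Sum.inr (v, i) : TVert V D) by
        subst hπ; rfl] at h1
      exact h1.symm
    have hφlip : ∀ x y : TVert V D, φ x - φ y ≤ ‖g x - g y‖ := by
      intro x y
      have h1 : φ x - φ y = ⟪g x - g y, e0⟫ := by simp [hφdef, inner_sub_left]
      rw [h1]
      calc ⟪g x - g y, e0⟫ ≤ ‖g x - g y‖ * ‖e0‖ := real_inner_le_norm _ _
        _ = ‖g x - g y‖ := by rw [he0, mul_one]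
    have hrevN : ‖g (Sum.inl 3) - g (Sum.inl 0)‖ = N := by rw [hNdef, norm_sub_rev]
    have hφst : φ (Sum.inl 3) - φ (Sum.inl 0) = N := by
      have h1 : φ (Sum.inl 3) - φ (Sum.inl 0) =
          ⟪g (Sum.inl 3) - g (Sum.inl 0), e0⟫ := by simp [hφdef, inner_sub_left]
      rw [h1, he0def, real_inner_smul_right, real_inner_self_eq_norm_sq, hrevN]
      rw [sq, ← mul_assoc, inv_mul_cancel₀ hNpos.ne', one_mul]
    obtain ⟨F, hF⟩ : ∃ F' : ℕ → ℝ,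
        F' = fun j : ℕ => φ (Sum.inr (w0, (↑j : Fin (D + 1)))) := ⟨_, rfl⟩
    -- tail bounds
    have h3Dtr : ((3 : ℝ≥0∞) * (D : ℝ≥0∞)).toReal = 3 * (D : ℝ) := by
      rw [ENNReal.toReal_mul]
      simp
    have hDtr : ((D : ℝ≥0∞)).toReal = (D : ℝ) := by simp
    have hA : φ (Sum.inl 1) - φ (Sum.inl 0) < S * (3 * (D : ℝ)) := by
      have he := hedge (Sum.inl 0) trivial
      simp only [tildeG, if_pos rfl] at he
      rw [h3Dtr] at he
      calc φ (Sum.inl 1) - φ (Sum.inl 0) ≤ ‖g (Sum.inl 1) - g (Sum.inl 0)‖ := hφlip _ _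
        _ = ‖g (Sum.inl 0) - g (Sum.inl 1)‖ := norm_sub_rev _ _
        _ < _ := he
    have hB : F 0 - φ (Sum.inl 1) < S * (D : ℝ) := by
      have he := hedge (Sum.inr (Sum.inl (Sum.inl w0))) trivial
      simp only [tildeG] at he
      rw [hDtr] at he
      have h00 : F 0 = φ (Sum.inr (w0, (0 : Fin (D + 1)))) := by
        simp only [hF, Nat.cast_zero]
      rw [h00]
      calc φ (Sum.inr (w0, (0 : Fin (D + 1)))) - φ (Sum.inl 1)
          ≤ ‖g (Sum.inr (w0, (0 : Fin (D + 1)))) - g (Sum.inl 1)‖ := hφlip _ _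
        _ = ‖g (Sum.inl 1) - g (Sum.inr (w0, (0 : Fin (D + 1))))‖ := norm_sub_rev _ _
        _ < _ := he
    have hC : φ (Sum.inl 2) - F D < S * (D : ℝ) := by
      have he := hedge (Sum.inr (Sum.inl (Sum.inr w0))) trivial
      simp only [tildeG] at he
      rw [hDtr] at he
      have hDD : F D = φ (Sum.inr (w0, Fin.last D)) := by
        have hfin : ((D : ℕ) : Fin (D + 1)) = Fin.last D := by
          ext
          rw [Fin.val_natCast]
          simp [Nat.mod_eq_of_lt]
        simp only [hF, hfin]
      rw [hDD]
      calc φ (Sum.inl 2) - φ (Sum.inr (w0, Fin.last D))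
          ≤ ‖g (Sum.inl 2) - g (Sum.inr (w0, Fin.last D))‖ := hφlip _ _
        _ = ‖g (Sum.inr (w0, Fin.last D)) - g (Sum.inl 2)‖ := norm_sub_rev _ _
        _ < _ := he
    have hE : φ (Sum.inl 3) - φ (Sum.inl 2) < S * (3 * (D : ℝ)) := by
      have he := hedge (Sum.inl 1) trivial
      have h10 : ¬((1 : Fin 2) = 0) := by decide
      simp only [tildeG, if_neg h10] at he
      rw [h3Dtr] at he
      calc φ (Sum.inl 3) - φ (Sum.inl 2) ≤ ‖g (Sum.inl 3) - g (Sum.inl 2)‖ := hφlip _ _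
        _ = ‖g (Sum.inl 2) - g (Sum.inl 3)‖ := norm_sub_rev _ _
        _ < _ := he
    -- middle bounds
    have hmid : ∀ i ∈ Finset.range D, F (i + 1) - F i ≤ Real.sqrt (T - β ^ 2 / 4) := by
      intro i hi
      have hiD : i < D := Finset.mem_range.mp hi
      obtain ⟨z, hz, hzb⟩ := hpartner (Fin.succ ⟨i, hiD⟩) w0
      have hcol := hedge (Sum.inr (Sum.inr (Sum.inr (Sum.inr (w0, ⟨i, hiD⟩))))) trivial
      have hdiag := hedge (Sum.inr (Sum.inr (Sum.inl (⟨(w0, z), hz⟩, ⟨i, hiD⟩)))) trivial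
      simp only [tildeG] at hcol hdiag
      rw [ENNReal.toReal_one, mul_one] at hcol hdiag
      have h1 : ‖g (Sum.inr (w0, Fin.succ ⟨i, hiD⟩)) -
          g (Sum.inr (w0, Fin.castSucc ⟨i, hiD⟩))‖ ≤ S := by
        rw [norm_sub_rev]; exact hcol.le
      have h2 : ‖g (Sum.inr (z, Fin.succ ⟨i, hiD⟩)) -
          g (Sum.inr (w0, Fin.castSucc ⟨i, hiD⟩))‖ ≤ S := by
        rw [norm_sub_rev]; exact hdiag.le
      have horth : ⟪g (Sum.inr (w0, Fin.succ ⟨i, hiD⟩)) -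
          g (Sum.inr (z, Fin.succ ⟨i, hiD⟩)), e0⟫ = 0 := by
        rw [inner_sub_left]
        have h4 := hφinv (Fin.succ ⟨i, hiD⟩) w0 z
        simp only [hφdef] at h4
        rw [h4, sub_self]
      have hps : ⟪g (Sum.inr (w0, Fin.succ ⟨i, hiD⟩)) -
          g (Sum.inr (w0, Fin.castSucc ⟨i, hiD⟩)), e0⟫ ^ 2 + β ^ 2 / 4 ≤ S ^ 2 :=
        proj_step hβ.le e0 _ _ _ he0 horth hzb h1 h2
      have ht2 : ⟪g (Sum.inr (w0, Fin.succ ⟨i, hiD⟩)) -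
          g (Sum.inr (w0, Fin.castSucc ⟨i, hiD⟩)), e0⟫ ^ 2 ≤ T - β ^ 2 / 4 := by
        have h5 := hS2
        linarith [hps]
      have hfin1 : ((i + 1 : ℕ) : Fin (D + 1)) = Fin.succ ⟨i, hiD⟩ := by
        ext
        rw [Fin.val_natCast, Fin.val_succ, Fin.val_mk]
        exact Nat.mod_eq_of_lt (by omega)
      have hfin0 : ((i : ℕ) : Fin (D + 1)) = Fin.castSucc ⟨i, hiD⟩ := by
        ext
        rw [Fin.val_natCast, Fin.coe_castSucc, Fin.val_mk]
        exact Nat.mod_eq_of_lt (by omega)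
      have hFi1 : F (i + 1) = φ (Sum.inr (w0, Fin.succ ⟨i, hiD⟩)) := by
        simp only [hF, Nat.cast_add, Nat.cast_one]
        rw [← hfin1]
        norm_cast
      have hFi0 : F i = φ (Sum.inr (w0, Fin.castSucc ⟨i, hiD⟩)) := by
        simp only [hF]
        rw [← hfin0]
      have hdd : F (i + 1) - F i = ⟪g (Sum.inr (w0, Fin.succ ⟨i, hiD⟩)) -
          g (Sum.inr (w0, Fin.castSucc ⟨i, hiD⟩)), e0⟫ := by
        rw [hFi1, hFi0]
        simp [hφdef, inner_sub_left]
      rw [hdd]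
      have habs : |⟪g (Sum.inr (w0, Fin.succ ⟨i, hiD⟩)) -
          g (Sum.inr (w0, Fin.castSucc ⟨i, hiD⟩)), e0⟫| ≤ Real.sqrt (T - β ^ 2 / 4) := by
        rw [← Real.sqrt_sq_eq_abs]
        exact Real.sqrt_le_sqrt ht2
      exact le_trans (le_abs_self _) habs
    have htel : F D - F 0 ≤ (D : ℝ) * Real.sqrt (T - β ^ 2 / 4) := by
      have hsum := Finset.sum_range_sub F D
      have hb := Finset.sum_le_sum hmid
      rw [hsum] at hb
      calc F D - F 0 ≤ ∑ _i ∈ Finset.range D, Real.sqrt (T - β ^ 2 / 4) := hb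
        _ = (D : ℝ) * Real.sqrt (T - β ^ 2 / 4) := by
            rw [Finset.sum_const, Finset.card_range, nsmul_eq_mul]
    have hstep : N < 8 * (D : ℝ) * S + (D : ℝ) * Real.sqrt (T - β ^ 2 / 4) := by
      have hdecomp : N = (φ (Sum.inl 3) - φ (Sum.inl 2)) + (φ (Sum.inl 2) - F D) +
          (F D - F 0) + (F 0 - φ (Sum.inl 1)) + (φ (Sum.inl 1) - φ (Sum.inl 0)) := by
        rw [← hφst]; ring
      rw [hdecomp]
      linarith [hA, hB, hC, hE, htel]
    have hTq2 : T - β ^ 2 / 4 = L ^ 2 - 8 * (β ^ 2 / 4) / 9 := by rw [hTL]; ring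
    have hSL : S = Real.sqrt (L ^ 2 + β ^ 2 / 4 / 9) := by rw [hS, hTL]
    have hend := endgame_ineq hq hcase hL0
    have hfinal : N < N := by
      calc N < 8 * (D : ℝ) * S + (D : ℝ) * Real.sqrt (T - β ^ 2 / 4) := hstep
        _ = (D : ℝ) * (8 * S + Real.sqrt (T - β ^ 2 / 4)) := by ring
        _ ≤ (D : ℝ) * (9 * L) := by
            refine mul_le_mul_of_nonneg_left ?_ hDpos.le
            rw [hSL, hTq2]
            exact hend
        _ = N := by
            have hD0 : (D : ℝ) ≠ 0 := hDpos.ne'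
            rw [hLdef]
            field_simp
    exact lt_irrefl N hfinal
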